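/- Let p ≥ 1, j ≥ 1, let J_1,…,J_j be a Clifford family on ℝ^p, and let A be an arbitrary real p×p matrix. Then the following are equivalent: (i) for every t ∈ ℝ the matrix exp(tA)·J_j satisfies (exp(tA)·J_j)² = −I and anticommutes with J_i for every i < j; (ii) A·J_j = −J_j·A, and A·J_i = J_i·A for every i < j. Here exp denotes the matrix exponential. -/

import Mathlib

open Matrix

section Aux

variable {n : ℕ}

private lemma comm_of_exp_comm (A B : Matrix (Fin n) (Fin n) ℝ)
    (h : ∀ t : ℝ, NormedSpace.exp (t • A) * B = B * NormedSpace.exp (t • A)) :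
    A * B = B * A := by
  letI : SeminormedRing (Matrix (Fin n) (Fin n) ℝ) := Matrix.linftyOpSemiNormedRing
  letI : NormedRing (Matrix (Fin n) (Fin n) ℝ) := Matrix.linftyOpNormedRing
  letI : NormedAlgebra ℝ (Matrix (Fin n) (Fin n) ℝ) := Matrix.linftyOpNormedAlgebra
  have hexp : HasDerivAt (fun t : ℝ => NormedSpace.exp (t • A)) A 0 := by
    have := hasDerivAt_exp_smul_const (𝕂 := ℝ) A (0 : ℝ)
    simp at this
    exact this
  have h1 : HasDerivAt (fun t : ℝ => NormedSpace.exp (t • A) * B) (A * B) 0 := by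
    exact hexp.mul_const B
  have h2 : HasDerivAt (fun t : ℝ => NormedSpace.exp (t • A) * B) (B * A) 0 := by
    have h2' : HasDerivAt (fun t : ℝ => B * NormedSpace.exp (t • A)) (B * A) 0 := by
      exact hexp.const_mul B
    exact h2'.congr_of_eventuallyEq (Filter.Eventually.of_forall fun t => (h t))
  exact h1.unique h2

private lemma anticomm_of_exp (A B : Matrix (Fin n) (Fin n) ℝ)
    (h : ∀ t : ℝ, NormedSpace.exp (t • A) * B * NormedSpace.exp (t • A) = B) :
    A * B = -(B * A) := by
  letI : SeminormedRing (Matrix (Fin n) (Fin n) ℝ) := Matrix.linftyOpSemiNormedRing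
  letI : NormedRing (Matrix (Fin n) (Fin n) ℝ) := Matrix.linftyOpNormedRing
  letI : NormedAlgebra ℝ (Matrix (Fin n) (Fin n) ℝ) := Matrix.linftyOpNormedAlgebra
  have hexp : HasDerivAt (fun t : ℝ => NormedSpace.exp (t • A)) A 0 := by
    have := hasDerivAt_exp_smul_const (𝕂 := ℝ) A (0 : ℝ)
    simp at this
    exact this
  have h1 : HasDerivAt (fun t : ℝ => NormedSpace.exp (t • A) * B * NormedSpace.exp (t • A))
      (A * B + B * A) 0 := by
    have := (hexp.mul_const B).mul hexp
    simp [mul_one] at this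
    exact this
  have h2 : HasDerivAt (fun t : ℝ => NormedSpace.exp (t • A) * B * NormedSpace.exp (t • A))
      (0 : Matrix (Fin n) (Fin n) ℝ) 0 :=
    (hasDerivAt_const (0 : ℝ) B).congr_of_eventuallyEq
      (Filter.Eventually.of_forall fun t => (h t))
  have h0 := h1.unique h2
  linear_combination (norm := noncomm_ring) h0

end Aux

/-- (Paper's Lemma 3.3.)  For a Clifford family `J₁,…,J_j`
(here `j = k+1` and `J_j` is the last member `J (Fin.last k)`) and an arbitrary
matrix `A`, the curve `t ↦ exp(tA)·J_j` consists of complex structures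
anticommuting with `J_i` for all `i < j` if and only if `A` anticommutes with
`J_j` and commutes with all `J_i`, `i < j`. -/
theorem exp_curve_in_centriole_iff (p k : ℕ) (hp : 1 ≤ p)
    (J : Fin (k + 1) → Matrix (Fin p) (Fin p) ℝ)
    (hcs : ∀ i, J i * J i = -1)
    (hanti : ∀ i j, i ≠ j → J i * J j = -(J j * J i))
    (A : Matrix (Fin p) (Fin p) ℝ) :
    ((∀ t : ℝ,
        (NormedSpace.exp (t • A) * J (Fin.last k)) *
          (NormedSpace.exp (t • A) * J (Fin.last k)) = -1 ∧
        ∀ i : Fin (k + 1), i < Fin.last k →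
          (NormedSpace.exp (t • A) * J (Fin.last k)) * J i
            = -(J i * (NormedSpace.exp (t • A) * J (Fin.last k)))) ↔
      (A * J (Fin.last k) = -(J (Fin.last k) * A) ∧
        ∀ i : Fin (k + 1), i < Fin.last k → A * J i = J i * A)) := by
  set Jl := J (Fin.last k) with hJl
  have hJJ : Jl * Jl = -1 := hcs _
  have hJinv : Jl * (-Jl) = 1 := by rw [mul_neg, hJJ, neg_neg]
  have hJinv' : (-Jl) * Jl = 1 := by rw [neg_mul, hJJ, neg_neg]
  constructor
  · rintro h
    constructor
    · apply anticomm_of_exp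
      intro t
      set E := NormedSpace.exp (t • A) with hE
      have h1 := (h t).1
      have h2 : E * Jl * (E * Jl) * (-Jl) = -1 * (-Jl) := by rw [h1]
      calc E * Jl * E = E * Jl * (E * (Jl * (-Jl))) := by rw [hJinv, mul_one]
        _ = E * Jl * (E * Jl) * (-Jl) := by noncomm_ring
        _ = -1 * (-Jl) := h2
        _ = Jl := by noncomm_ring
    · intro i hi
      apply comm_of_exp_comm
      intro t
      set E := NormedSpace.exp (t • A) with hE
      have h2 := (h t).2 i hi
      have hJa : Jl * J i = -(J i * Jl) := hanti _ _ (Ne.symm (ne_of_lt hi))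
      have key : E * (J i * Jl) = J i * (E * Jl) := by
        rw [mul_assoc, hJa, mul_neg] at h2
        exact neg_injective h2
      calc E * J i = E * (J i * Jl) * (-Jl) := by
            rw [mul_assoc, mul_assoc, hJinv, mul_one]
        _ = J i * (E * Jl) * (-Jl) := by rw [key]
        _ = J i * E := by rw [mul_assoc, mul_assoc, hJinv, mul_one]
  · rintro ⟨hA, hAc⟩ t
    set E := NormedSpace.exp (t • A) with hE
    have hu : IsUnit Jl := by
      have := invertibleOfRightInverse _ _ hJinv
      exact isUnit_of_invertible Jl
    have hinv : Jl⁻¹ = -Jl := Matrix.inv_eq_right_inv hJinv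
    have hJA : Jl * A = -(A * Jl) := by rw [hA, neg_neg]
    have hAA : Jl * A * -Jl = -A := by
      rw [hJA]
      calc -(A * Jl) * -Jl = A * (Jl * Jl) := by noncomm_ring
        _ = -A := by rw [hJJ]; noncomm_ring
    have hconj : Jl * (t • A) * Jl⁻¹ = -(t • A) := by
      rw [hinv]
      calc Jl * (t • A) * -Jl = t • (Jl * A * -Jl) := by
            rw [Matrix.mul_smul, Matrix.smul_mul]
        _ = t • (-A) := by rw [hAA]
        _ = -(t • A) := smul_neg t A
    have hexpconj : Jl * E * Jl⁻¹ = NormedSpace.exp (-(t • A)) := by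
      rw [hE, ← Matrix.exp_conj Jl (t • A) hu, hconj]
    have hJE : Jl * E = NormedSpace.exp (-(t • A)) * Jl := by
      calc Jl * E = Jl * E * Jl⁻¹ * Jl := by
            rw [mul_assoc (Jl * E), hinv, hJinv', mul_one]
        _ = NormedSpace.exp (-(t • A)) * Jl := by rw [hexpconj]
    have hEE : E * NormedSpace.exp (-(t • A)) = 1 := by
      rw [hE, ← Matrix.exp_add_of_commute (t • A) (-(t • A)) (Commute.neg_right (Commute.refl _))]
      simp
    have hEJE : E * Jl * E = Jl := by
      calc E * Jl * E = E * (Jl * E) := by rw [mul_assoc]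
        _ = E * (NormedSpace.exp (-(t • A)) * Jl) := by rw [hJE]
        _ = E * NormedSpace.exp (-(t • A)) * Jl := by rw [mul_assoc]
        _ = Jl := by rw [hEE, one_mul]
    constructor
    · calc E * Jl * (E * Jl) = E * Jl * E * Jl := (mul_assoc _ _ _).symm
        _ = Jl * Jl := by rw [hEJE]
        _ = -1 := hJJ
    · intro i hi
      have hJa : Jl * J i = -(J i * Jl) := hanti _ _ (Ne.symm (ne_of_lt hi))
      have hcomm : Commute (t • A) (J i) := by
        have : Commute A (J i) := hAc i hi
        exact this.smul_left t
      have hEcomm : E * J i = J i * E := hcomm.exp_left.eq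
      calc E * Jl * J i = E * (Jl * J i) := by rw [mul_assoc]
        _ = E * -(J i * Jl) := by rw [hJa]
        _ = -(E * J i * Jl) := by noncomm_ring
        _ = -(J i * E * Jl) := by rw [hEcomm]
        _ = -(J i * (E * Jl)) := by rw [mul_assoc]
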